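/- Triangle inequality for the interventional superresolution consistency (ISC) error under composition of abstractions: D(μ·α_X⁺·β_X⁺, α_Y⁺·β_Y⁺·μ'') ≤ D(μ·α_X⁺, α_Y⁺·μ') + D(μ'·β_X⁺, β_Y⁺·μ''), where γ⁺ = γᵀ·(γ·γᵀ)⁻¹ denotes the pseudo-inverse of an abstraction matrix γ. -/

import Mathlib

open Finset Matrix

noncomputable section

/-- A probability vector on a finite type: nonnegative entries summing to 1. -/
def IsProbVec {X : Type*} [Fintype X] (p : X → ℝ) : Prop :=
  (∀ x, 0 ≤ p x) ∧ ∑ x, p x = 1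

/-- Kullback–Leibler divergence, with the convention that terms with `p x = 0`
contribute `0`. -/
noncomputable def KL {X : Type*} [Fintype X] (p q : X → ℝ) : ℝ :=
  ∑ x, if p x = 0 then 0 else p x * Real.log (p x / q x)

/-- Jensen–Shannon distance. -/
noncomputable def JSD {X : Type*} [Fintype X] (p q : X → ℝ) : ℝ :=
  Real.sqrt ((1 / 2) * KL p (fun x => (p x + q x) / 2)
    + (1 / 2) * KL q (fun x => (p x + q x) / 2))

/-- A column-stochastic matrix: nonnegative entries, every column sums to 1. -/
def IsColStoch {Y X : Type*} [Fintype Y] [Fintype X] (M : Matrix Y X ℝ) : Prop :=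
  (∀ y x, 0 ≤ M y x) ∧ ∀ x, ∑ y, M y x = 1

/-- The sup-JSD distance between two matrices of the same shape:
the maximum over columns of the JSD between corresponding columns. -/
noncomputable def supJSD {Y X : Type*} [Fintype Y] [Fintype X] [Nonempty X]
    (M N : Matrix Y X ℝ) : ℝ :=
  Finset.univ.sup' Finset.univ_nonempty fun x => JSD (fun y => M y x) (fun y => N y x)

/-- An abstraction matrix: entries in {0,1}, every column contains exactly one 1,
and every row contains at least one 1. -/
def IsAbsMatrix {N M : Type*} [Fintype N] [Fintype M] (α : Matrix N M ℝ) : Prop :=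
  (∀ j i, α j i = 0 ∨ α j i = 1) ∧ (∀ i, ∃! j, α j i = 1) ∧ (∀ j, ∃ i, α j i = 1)

/-- The pseudo-inverse `α⁺ = αᵀ·(α·αᵀ)⁻¹` of an abstraction matrix. -/
noncomputable def pinv {N M : Type*} [Fintype N] [Fintype M] [DecidableEq N]
    (α : Matrix N M ℝ) : Matrix M N ℝ :=
  αᵀ * (α * αᵀ)⁻¹

namespace ISCAux
open Real Set Filter

noncomputable def phi (t : ℝ) : ℝ := t * Real.log t

noncomputable def psi (a b : ℝ) : ℝ := phi a / 2 + phi b / 2 - phi ((a + b) / 2)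

lemma continuous_phi : Continuous phi := Real.continuous_mul_log

@[simp] lemma phi_zero : phi 0 = 0 := by simp [phi]

@[simp] lemma phi_one : phi 1 = 0 := by simp [phi]

lemma phi_mul (c x : ℝ) : phi (c * x) = x * phi c + c * phi x := by
  rcases eq_or_ne c 0 with rfl | hc
  · simp [phi]
  rcases eq_or_ne x 0 with rfl | hx
  · simp [phi]
  · simp only [phi, Real.log_mul hc hx]; ring

lemma psi_symm (a b : ℝ) : psi a b = psi b a := by
  simp only [psi, add_comm a b]; ring

@[simp] lemma psi_self (a : ℝ) : psi a a = 0 := by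
  have : (a + a) / 2 = a := by ring
  simp [psi, this]

lemma psi_mul (c a b : ℝ) : psi (c * a) (c * b) = c * psi a b := by
  have h : (c * a + c * b) / 2 = c * ((a + b) / 2) := by ring
  simp only [psi, h, phi_mul]; ring

lemma psi_nonneg {a b : ℝ} (ha : 0 ≤ a) (hb : 0 ≤ b) : 0 ≤ psi a b := by
  have h := Real.convexOn_mul_log.2 (Set.mem_Ici.2 ha) (Set.mem_Ici.2 hb)
    (by norm_num : (0:ℝ) ≤ 1/2) (by norm_num : (0:ℝ) ≤ 1/2) (by norm_num)
  simp only [smul_eq_mul] at h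
  have he : (1/2 : ℝ) * a + (1/2) * b = (a + b) / 2 := by ring
  rw [he] at h
  simp only [psi, phi]
  linarith

lemma psi_pos {a b : ℝ} (ha : 0 ≤ a) (hb : 0 ≤ b) (hne : a ≠ b) : 0 < psi a b := by
  have h := Real.strictConvexOn_mul_log.2 (Set.mem_Ici.2 ha) (Set.mem_Ici.2 hb) hne
    (by norm_num : (0:ℝ) < 1/2) (by norm_num : (0:ℝ) < 1/2) (by norm_num)
  simp only [smul_eq_mul] at h
  have he : (1/2 : ℝ) * a + (1/2) * b = (a + b) / 2 := by ring
  rw [he] at h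
  simp only [psi, phi]
  linarith

/-- the symmetrized entropy-like function `g u`. -/
noncomputable def gg (u : ℝ) : ℝ := (1 - u) * Real.log (1 - u) + (1 + u) * Real.log (1 + u)

lemma gg_nonneg {u : ℝ} (h0 : 0 ≤ u) (h1 : u ≤ 1) : 0 ≤ gg u := by
  have := psi_nonneg (by linarith : (0:ℝ) ≤ 1 - u) (by linarith : (0:ℝ) ≤ 1 + u)
  have he : (1 - u + (1 + u)) / 2 = 1 := by ring
  simp only [psi, he, phi] at this
  simp only [gg]
  simp at this
  linarith

lemma gg_eq_two_psi (u : ℝ) : gg u = 2 * psi (1 - u) (1 + u) := by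
  have he : (1 - u + (1 + u)) / 2 = 1 := by ring
  simp only [gg, psi, he, phi]
  simp
  ring

noncomputable def Phi (u : ℝ) : ℝ :=
  (-(Real.log (1 - u))) * Real.log (1 + u) - gg u

lemma Phi_hasDerivAt {u : ℝ} (h0 : 0 < 1 - u) (h1 : 0 < 1 + u) :
    HasDerivAt Phi
      (((1 - u)⁻¹ * Real.log (1 + u) + (-(Real.log (1 - u))) * (1 + u)⁻¹)
        - ((-(Real.log (1 - u) + 1)) + (Real.log (1 + u) + 1))) u := by
  have hlog1 : HasDerivAt (fun u : ℝ => Real.log (1 - u)) (-(1 - u)⁻¹) u := by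
    have hinner : HasDerivAt (fun u : ℝ => 1 - u) (-1) u := by
      simpa using (hasDerivAt_id u).const_sub 1
    have := (Real.hasDerivAt_log (ne_of_gt h0)).comp u hinner
    simpa [Function.comp_def] using this
  have hlog2 : HasDerivAt (fun u : ℝ => Real.log (1 + u)) ((1 + u)⁻¹) u := by
    have hinner : HasDerivAt (fun u : ℝ => 1 + u) 1 u := by
      simpa using (hasDerivAt_id u).const_add 1
    have := (Real.hasDerivAt_log (ne_of_gt h1)).comp u hinner
    simpa [Function.comp_def] using this
  have hphi1 : HasDerivAt (fun u : ℝ => (1 - u) * Real.log (1 - u))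
      (-(Real.log (1 - u) + 1)) u := by
    have hinner : HasDerivAt (fun u : ℝ => 1 - u) (-1) u := by
      simpa using (hasDerivAt_id u).const_sub 1
    have := (Real.hasDerivAt_mul_log (ne_of_gt h0)).comp u hinner
    simpa [mul_comm, Function.comp_def] using this
  have hphi2 : HasDerivAt (fun u : ℝ => (1 + u) * Real.log (1 + u))
      (Real.log (1 + u) + 1) u := by
    have hinner : HasDerivAt (fun u : ℝ => 1 + u) 1 u := by
      simpa using (hasDerivAt_id u).const_add 1
    have := (Real.hasDerivAt_mul_log (ne_of_gt h1)).comp u hinner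
    simpa [Function.comp_def] using this
  have := ((hlog1.neg.mul hlog2)).sub (hphi1.add hphi2)
  refine this.congr_deriv ?_
  simp only [Pi.neg_apply]
  ring

lemma Phi_nonneg {u : ℝ} (h0 : 0 ≤ u) (h1 : u < 1) : 0 ≤ Phi u := by
  have hmono : MonotoneOn Phi (Set.Ico (0:ℝ) 1) := by
    have hderiv : ∀ x ∈ Set.Ioo (0:ℝ) 1, HasDerivAt Phi
        (((1 - x)⁻¹ * Real.log (1 + x) + (-(Real.log (1 - x))) * (1 + x)⁻¹)
          - ((-(Real.log (1 - x) + 1)) + (Real.log (1 + x) + 1))) x := fun x hx =>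
      Phi_hasDerivAt (by linarith [hx.2]) (by linarith [hx.1])
    have hcont : ContinuousOn Phi (Set.Ico (0:ℝ) 1) := by
      intro x hx
      have h0x : 0 < 1 - x := by simp only [Set.mem_Ico] at hx; linarith [hx.2]
      have h1x : 0 < 1 + x := by simp only [Set.mem_Ico] at hx; linarith [hx.1]
      have hl1 : ContinuousAt (fun u : ℝ => Real.log (1 - u)) x :=
        (Real.continuousAt_log (ne_of_gt h0x)).comp (by fun_prop)
      have hl2 : ContinuousAt (fun u : ℝ => Real.log (1 + u)) x :=
        (Real.continuousAt_log (ne_of_gt h1x)).comp (by fun_prop)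
      apply ContinuousAt.continuousWithinAt
      unfold Phi gg
      exact (hl1.neg.mul hl2).sub (((by fun_prop : ContinuousAt (fun u:ℝ => 1-u) x).mul hl1).add
        ((by fun_prop : ContinuousAt (fun u:ℝ => 1+u) x).mul hl2))
    have hint : interior (Set.Ico (0:ℝ) 1) = Set.Ioo 0 1 := interior_Ico
    apply monotoneOn_of_deriv_nonneg (convex_Ico 0 1) hcont
    · rw [hint]
      exact fun x hx => (hderiv x hx).differentiableAt.differentiableWithinAt
    · rw [hint]
      intro x hx
      rw [(hderiv x hx).deriv]
      have h0x : 0 < 1 - x := by linarith [hx.2]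
      have h1x : 0 < 1 + x := by linarith [hx.1]
      have hgg : 0 ≤ gg x := gg_nonneg hx.1.le hx.2.le
      have key : (((1 - x)⁻¹ * Real.log (1 + x) + (-(Real.log (1 - x))) * (1 + x)⁻¹)
          - ((-(Real.log (1 - x) + 1)) + (Real.log (1 + x) + 1)))
          = x * gg x / ((1 - x) * (1 + x)) := by
        unfold gg
        field_simp
        ring
      rw [key]
      apply div_nonneg (mul_nonneg hx.1.le hgg) (by positivity)
  have h00 : (0:ℝ) ∈ Set.Ico (0:ℝ) 1 := by norm_num
  have huu : u ∈ Set.Ico (0:ℝ) 1 := ⟨h0, h1⟩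
  have := hmono h00 huu h0
  simpa [Phi, gg] using this

/-- The core inequality. -/
lemma core {u : ℝ} (h0 : 0 ≤ u) (h1 : u < 1) :
    gg u ≤ (-(Real.log (1 - u))) * Real.log (1 + u) := by
  have := Phi_nonneg h0 h1
  unfold Phi at this
  linarith

lemma continuous_psi_right (a : ℝ) : Continuous (fun t => psi a t) := by
  unfold psi
  exact (continuous_const.add ((continuous_phi.comp continuous_id).div_const 2)).sub
    (continuous_phi.comp ((continuous_const.add continuous_id).div_const 2))

/-- derivative of `psi a ·`. -/
lemma hasDerivAt_psi_right {a t : ℝ} (ht : t ≠ 0) (hat : a + t ≠ 0) :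
    HasDerivAt (fun y => psi a y) ((Real.log t - Real.log ((a + t) / 2)) / 2) t := by
  have h1 : HasDerivAt (fun y : ℝ => phi y / 2) ((Real.log t + 1) / 2) t :=
    (Real.hasDerivAt_mul_log ht).div_const 2
  have hinner : HasDerivAt (fun y : ℝ => (a + y) / 2) (1 / 2) t := by
    simpa using ((hasDerivAt_id t).const_add a).div_const 2
  have hm : (a + t) / 2 ≠ 0 := by
    intro h; apply hat; field_simp at h; linarith [h]
  have h2 : HasDerivAt (fun y : ℝ => phi ((a + y) / 2))
      ((Real.log ((a + t) / 2) + 1) * (1 / 2)) t :=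
    by simpa [Function.comp_def, phi] using (Real.hasDerivAt_mul_log hm).comp t hinner
  have := (h1.const_add (phi a / 2)).sub h2
  refine this.congr_deriv ?_
  ring

lemma hasDerivAt_psi_left {x t : ℝ} (hx : x ≠ 0) (hxt : x + t ≠ 0) :
    HasDerivAt (fun y => psi y t) ((Real.log x - Real.log ((x + t) / 2)) / 2) x := by
  have h := hasDerivAt_psi_right (a := t) hx (by simpa [add_comm] using hxt)
  have : (fun y => psi t y) = (fun y => psi y t) := by
    funext y; rw [psi_symm]
  rw [this] at h
  simpa [add_comm] using h

/-- scaled core inequality -/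
lemma core_scaled {x t : ℝ} (hx : 0 < x) (hxt : x < t) :
    4 * psi x t ≤ (x + t) * ((Real.log ((x + t) / 2) - Real.log x)
      * (Real.log t - Real.log ((x + t) / 2))) := by
  set m := (x + t) / 2 with hm_def
  have hm : 0 < m := by rw [hm_def]; apply div_pos (by linarith) two_pos
  set u := (t - x) / (x + t) with hu_def
  have hden : 0 < x + t := by linarith
  have hu0 : 0 < u := div_pos (by linarith) hden
  have hu1 : u < 1 := by
    rw [hu_def, div_lt_one hden]; linarith
  have hx_eq : m * (1 - u) = x := by
    rw [hm_def, hu_def]; field_simp; ring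
  have ht_eq : m * (1 + u) = t := by
    rw [hm_def, hu_def]; field_simp; ring
  have hpsi : psi x t = m * psi (1 - u) (1 + u) := by
    rw [← hx_eq, ← ht_eq, psi_mul]
  have hlogx : Real.log x = Real.log m + Real.log (1 - u) := by
    rw [← hx_eq, Real.log_mul (ne_of_gt hm) (by linarith)]
  have hlogt : Real.log t = Real.log m + Real.log (1 + u) := by
    rw [← ht_eq, Real.log_mul (ne_of_gt hm) (by linarith)]
  have hcore := core hu0.le hu1
  rw [gg_eq_two_psi] at hcore
  have h2m : x + t = 2 * m := by rw [hm_def]; ring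
  rw [hpsi, hlogx, hlogt, h2m]
  have : Real.log m - (Real.log m + Real.log (1 - u)) = -Real.log (1 - u) := by ring
  calc 4 * (m * psi (1 - u) (1 + u)) = 2 * m * (2 * psi (1 - u) (1 + u)) := by ring
    _ ≤ 2 * m * ((-(Real.log (1 - u))) * Real.log (1 + u)) := by
        apply mul_le_mul_of_nonneg_left hcore (by positivity)
    _ = 2 * m * ((Real.log m - (Real.log m + Real.log (1 - u)))
        * (Real.log m + Real.log (1 + u) - Real.log m)) := by ring

/-- The ratio function is monotone. -/
lemma Rmono {t : ℝ} (ht : 0 < t) :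
    MonotoneOn (fun x => (Real.log t - Real.log ((x + t) / 2)) / Real.sqrt (psi x t))
      (Set.Ioo 0 t) := by
  set f := fun x => (Real.log t - Real.log ((x + t) / 2)) / Real.sqrt (psi x t) with hf
  have hderiv : ∀ x ∈ Set.Ioo (0:ℝ) t, HasDerivAt f
      (((-(x + t)⁻¹) * Real.sqrt (psi x t)
        - (Real.log t - Real.log ((x + t) / 2))
          * ((Real.log x - Real.log ((x + t) / 2)) / 2 / (2 * Real.sqrt (psi x t))))
        / (Real.sqrt (psi x t)) ^ 2) x := by
    intro x hx
    obtain ⟨hx0, hxt⟩ := hx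
    have hpsipos : 0 < psi x t := psi_pos hx0.le ht.le (ne_of_lt hxt)
    have hsq : 0 < Real.sqrt (psi x t) := Real.sqrt_pos.2 hpsipos
    have hxt0 : (0:ℝ) < x + t := by linarith
    have hnum : HasDerivAt (fun x => Real.log t - Real.log ((x + t) / 2)) (-(x + t)⁻¹) x := by
      have hinner : HasDerivAt (fun y : ℝ => (y + t) / 2) (1 / 2) x := by
        simpa using ((hasDerivAt_id x).add_const t).div_const 2
      have hm : (x + t) / 2 ≠ 0 := by positivity
      have hlog : HasDerivAt (fun y : ℝ => Real.log ((y + t) / 2)) (((x + t) / 2)⁻¹ * (1/2)) x :=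
        by simpa [Function.comp_def] using (Real.hasDerivAt_log hm).comp x hinner
      have := hlog.const_sub (Real.log t)
      refine this.congr_deriv ?_
      field_simp
  -- continuing below
    have hpsid : HasDerivAt (fun y => psi y t)
        ((Real.log x - Real.log ((x + t) / 2)) / 2) x :=
      hasDerivAt_psi_left (ne_of_gt hx0) (ne_of_gt hxt0)
    have hden : HasDerivAt (fun y => Real.sqrt (psi y t))
        ((Real.log x - Real.log ((x + t) / 2)) / 2 / (2 * Real.sqrt (psi x t))) x :=
      hpsid.sqrt (ne_of_gt hpsipos)
    exact hnum.div hden (ne_of_gt hsq)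
  apply monotoneOn_of_deriv_nonneg (convex_Ioo 0 t)
  · intro x hx
    exact ((hderiv x hx).differentiableAt.continuousAt).continuousWithinAt
  · rw [interior_Ioo]
    exact fun x hx => (hderiv x hx).differentiableAt.differentiableWithinAt
  · rw [interior_Ioo]
    intro x hx
    rw [(hderiv x hx).deriv]
    obtain ⟨hx0, hxt⟩ := hx
    have hpsipos : 0 < psi x t := psi_pos hx0.le ht.le (ne_of_lt hxt)
    have hsq : 0 < Real.sqrt (psi x t) := Real.sqrt_pos.2 hpsipos
    have hxt0 : (0:ℝ) < x + t := by linarith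
    have hkey := core_scaled hx0 hxt
    apply div_nonneg _ (sq_nonneg _)
    have hs2 : Real.sqrt (psi x t) ^ 2 = psi x t := Real.sq_sqrt hpsipos.le
    have hexpand : (-(x + t)⁻¹) * Real.sqrt (psi x t)
        - (Real.log t - Real.log ((x + t) / 2))
          * ((Real.log x - Real.log ((x + t) / 2)) / 2 / (2 * Real.sqrt (psi x t)))
        = ((x + t) * ((Real.log ((x + t) / 2) - Real.log x)
            * (Real.log t - Real.log ((x + t) / 2))) - 4 * psi x t)
          / (4 * Real.sqrt (psi x t) * (x + t)) := by
      set s := Real.sqrt (psi x t) with hsdef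
      have hps : psi x t = s ^ 2 := (Real.sq_sqrt hpsipos.le).symm
      rw [eq_div_iff (by positivity), hps]
      field_simp
      ring
    rw [hexpand]
    exact div_nonneg (by linarith) (by positivity)

/-- `psi a ·` is monotone on `[a, ∞)` for `a > 0`. -/
lemma psi_right_mono {a : ℝ} (ha : 0 < a) : MonotoneOn (fun t => psi a t) (Set.Ici a) := by
  apply monotoneOn_of_deriv_nonneg (convex_Ici a) (continuous_psi_right a).continuousOn
  · rw [interior_Ici]
    intro t ht
    have hta : a < t := ht
    have ht0 : 0 < t := lt_trans ha hta
    exact (hasDerivAt_psi_right (ne_of_gt ht0)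
      (by positivity : a + t ≠ 0)).differentiableAt.differentiableWithinAt
  · rw [interior_Ici]
    intro t ht
    have hta : a < t := ht
    have ht0 : 0 < t := lt_trans ha hta
    rw [(hasDerivAt_psi_right (ne_of_gt ht0) (by positivity : a + t ≠ 0)).deriv]
    have hm : 0 < (a + t) / 2 := by positivity
    have : (a + t) / 2 ≤ t := by linarith
    have := Real.log_le_log hm this
    linarith

/-- `psi · c` is antitone on `(0, c]` for `c > 0`. -/
lemma psi_left_anti {c : ℝ} (hc : 0 < c) : AntitoneOn (fun x => psi x c) (Set.Ioc 0 c) := by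
  apply antitoneOn_of_deriv_nonpos (convex_Ioc 0 c)
  · apply Continuous.continuousOn
    have : (fun x => psi x c) = (fun x => psi c x) := by funext x; rw [psi_symm]
    rw [this]; exact continuous_psi_right c
  · rw [interior_Ioc]
    intro x hx
    exact (hasDerivAt_psi_left (ne_of_gt hx.1)
      (by have := hx.1; positivity : x + c ≠ 0)).differentiableAt.differentiableWithinAt
  · rw [interior_Ioc]
    intro x hx
    obtain ⟨hx0, hxc⟩ := hx
    rw [(hasDerivAt_psi_left (ne_of_gt hx0) (by positivity : x + c ≠ 0)).deriv]
    have hm : x ≤ (x + c) / 2 := by linarith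
    have := Real.log_le_log hx0 hm
    linarith

/-- scalar triangle inequality, interior case -/
lemma tri_interior {a b c : ℝ} (ha : 0 < a) (hab : a < b) (hbc : b < c) :
    Real.sqrt (psi a c) ≤ Real.sqrt (psi a b) + Real.sqrt (psi b c) := by
  have hb : 0 < b := lt_trans ha hab
  have hc : 0 < c := lt_trans hb hbc
  set W := fun t => Real.sqrt (psi b t) - Real.sqrt (psi a t) with hW
  have hmono : MonotoneOn W (Set.Icc b c) := by
    apply monotoneOn_of_deriv_nonneg (convex_Icc b c)
    · apply Continuous.continuousOn
      exact (Real.continuous_sqrt.comp (continuous_psi_right b)).sub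
        (Real.continuous_sqrt.comp (continuous_psi_right a))
    · rw [interior_Icc]
      intro t ht
      obtain ⟨hbt, htc⟩ := ht
      have ht0 : 0 < t := lt_trans hb hbt
      have hpb : 0 < psi b t := psi_pos hb.le ht0.le (ne_of_lt hbt)
      have hpa : 0 < psi a t := psi_pos ha.le ht0.le (ne_of_lt (lt_trans hab hbt))
      exact (((hasDerivAt_psi_right (ne_of_gt ht0) (by positivity)).sqrt
        (ne_of_gt hpb)).sub ((hasDerivAt_psi_right (ne_of_gt ht0)
          (by positivity)).sqrt (ne_of_gt hpa))).differentiableAt.differentiableWithinAt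
    · rw [interior_Icc]
      intro t ht
      obtain ⟨hbt, htc⟩ := ht
      have ht0 : 0 < t := lt_trans hb hbt
      have hat : a < t := lt_trans hab hbt
      have hpb : 0 < psi b t := psi_pos hb.le ht0.le (ne_of_lt hbt)
      have hpa : 0 < psi a t := psi_pos ha.le ht0.le (ne_of_lt hat)
      have hd : HasDerivAt W
          ((Real.log t - Real.log ((b + t) / 2)) / 2 / (2 * Real.sqrt (psi b t))
            - (Real.log t - Real.log ((a + t) / 2)) / 2 / (2 * Real.sqrt (psi a t))) t :=
        ((hasDerivAt_psi_right (ne_of_gt ht0) (by positivity)).sqrt (ne_of_gt hpb)).sub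
          ((hasDerivAt_psi_right (ne_of_gt ht0) (by positivity)).sqrt (ne_of_gt hpa))
      rw [hd.deriv]
      have hR := Rmono ht0 (Set.mem_Ioo.2 ⟨ha, hat⟩) (Set.mem_Ioo.2 ⟨hb, hbt⟩) hab.le
      simp only at hR
      have h1 : (Real.log t - Real.log ((a + t) / 2)) / 2 / (2 * Real.sqrt (psi a t))
          = ((Real.log t - Real.log ((a + t) / 2)) / Real.sqrt (psi a t)) / 4 := by
        field_simp
        ring
      have h2 : (Real.log t - Real.log ((b + t) / 2)) / 2 / (2 * Real.sqrt (psi b t))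
          = ((Real.log t - Real.log ((b + t) / 2)) / Real.sqrt (psi b t)) / 4 := by
        field_simp
        ring
      rw [h1, h2]
      linarith
  have hWb : W b = -Real.sqrt (psi a b) := by
    simp [hW, psi_self]
  have := hmono (Set.mem_Icc.2 ⟨le_refl b, hbc.le⟩) (Set.mem_Icc.2 ⟨hbc.le, le_refl c⟩) hbc.le
  rw [hWb] at this
  have hle : -Real.sqrt (psi a b) ≤ Real.sqrt (psi b c) - Real.sqrt (psi a c) := this
  linarith

/-- scalar triangle inequality for positive reals -/
lemma tri_pos {a b c : ℝ} (ha : 0 < a) (hb : 0 < b) (hc : 0 < c) :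
    Real.sqrt (psi a c) ≤ Real.sqrt (psi a b) + Real.sqrt (psi b c) := by
  -- wlog a ≤ c
  have key : ∀ a b c : ℝ, 0 < a → 0 < b → 0 < c → a ≤ c →
      Real.sqrt (psi a c) ≤ Real.sqrt (psi a b) + Real.sqrt (psi b c) := by
    intro a b c ha hb hc hac
    rcases eq_or_lt_of_le hac with rfl | hac
    · rw [psi_self]
      simp only [Real.sqrt_zero]
      positivity
    rcases le_or_gt b a with hba | hab
    · -- b ≤ a : use antitonicity of psi · c
      have h1 : psi a c ≤ psi b c :=
        psi_left_anti hc (Set.mem_Ioc.2 ⟨hb, le_trans hba hac.le⟩)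
          (Set.mem_Ioc.2 ⟨ha, hac.le⟩) hba
      have := Real.sqrt_le_sqrt h1
      have h2 : (0:ℝ) ≤ Real.sqrt (psi a b) := Real.sqrt_nonneg _
      linarith
    rcases le_or_gt c b with hcb | hbc
    · -- c ≤ b : use monotonicity of psi a ·
      have h1 : psi a c ≤ psi a b :=
        psi_right_mono ha (Set.mem_Ici.2 hac.le) (Set.mem_Ici.2 (le_trans hac.le hcb)) hcb
      have := Real.sqrt_le_sqrt h1
      have h2 : (0:ℝ) ≤ Real.sqrt (psi b c) := Real.sqrt_nonneg _
      linarith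
    · exact tri_interior ha hab hbc
  rcases le_total a c with hac | hca
  · exact key a b c ha hb hc hac
  · have := key c b a hc hb ha hca
    rw [psi_symm c b, psi_symm b a, psi_symm c a] at this
    linarith

/-- scalar triangle inequality for nonnegative reals -/
lemma tri {a b c : ℝ} (ha : 0 ≤ a) (hb : 0 ≤ b) (hc : 0 ≤ c) :
    Real.sqrt (psi a c) ≤ Real.sqrt (psi a b) + Real.sqrt (psi b c) := by
  have hev : ∀ ε : ℝ, ε ∈ Set.Ioi (0:ℝ) →
      Real.sqrt (psi (a + ε) (c + ε)) ≤
        Real.sqrt (psi (a + ε) (b + ε)) + Real.sqrt (psi (b + ε) (c + ε)) := by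
    intro ε hε
    exact tri_pos (by linarith [Set.mem_Ioi.1 hε]) (by linarith [Set.mem_Ioi.1 hε])
      (by linarith [Set.mem_Ioi.1 hε])
  have hcont : ∀ x y : ℝ, Continuous fun ε : ℝ => Real.sqrt (psi (x + ε) (y + ε)) := by
    intro x y
    apply Real.continuous_sqrt.comp
    unfold psi
    exact (((continuous_phi.comp (continuous_const.add continuous_id)).div_const 2).add
      ((continuous_phi.comp (continuous_const.add continuous_id)).div_const 2)).sub
      (continuous_phi.comp (((continuous_const.add continuous_id).add
        (continuous_const.add continuous_id)).div_const 2))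
  have hne : (nhdsWithin (0:ℝ) (Set.Ioi 0)).NeBot := nhdsGT_neBot (0:ℝ)
  have hlim : ∀ x y : ℝ, Filter.Tendsto (fun ε : ℝ => Real.sqrt (psi (x + ε) (y + ε)))
      (nhdsWithin 0 (Set.Ioi 0)) (nhds (Real.sqrt (psi x y))) := by
    intro x y
    have := ((hcont x y).tendsto 0).mono_left (nhdsWithin_le_nhds (s := Set.Ioi (0:ℝ)))
    simpa using this
  exact le_of_tendsto_of_tendsto (hlim a c) ((hlim a b).add (hlim b c))
    (eventually_mem_nhdsWithin.mono fun ε hε => hev ε hε)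

/-- per-coordinate identification of the JSD summand with `psi`. -/
lemma half_term {a b : ℝ} (ha : 0 ≤ a) (hb : 0 ≤ b) :
    (1/2 : ℝ) * (if a = 0 then 0 else a * Real.log (a / ((a + b) / 2)))
      + (1/2 : ℝ) * (if b = 0 then 0 else b * Real.log (b / ((a + b) / 2)))
      = psi a b := by
  rcases eq_or_lt_of_le ha with rfl | ha'
  · rcases eq_or_lt_of_le hb with rfl | hb'
    · simp [psi, phi]
    · have hb0 : b ≠ 0 := ne_of_gt hb'
      have h2 : (0 + b) / 2 = b / 2 := by ring
      simp only [if_pos rfl, if_neg hb0, h2]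
      rw [Real.log_div hb0 (by positivity)]
      rw [Real.log_div hb0 (by norm_num : (2:ℝ) ≠ 0)]
      simp only [psi, phi, h2]
      rw [Real.log_div hb0 (by norm_num : (2:ℝ) ≠ 0)]
      simp
      ring
  · rcases eq_or_lt_of_le hb with rfl | hb'
    · have ha0 : a ≠ 0 := ne_of_gt ha'
      have h2 : (a + 0) / 2 = a / 2 := by ring
      simp only [if_neg ha0, if_pos rfl, h2]
      rw [Real.log_div ha0 (by positivity)]
      rw [Real.log_div ha0 (by norm_num : (2:ℝ) ≠ 0)]
      simp only [psi, phi, h2]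
      rw [Real.log_div ha0 (by norm_num : (2:ℝ) ≠ 0)]
      simp
      ring
    · have ha0 : a ≠ 0 := ne_of_gt ha'
      have hb0 : b ≠ 0 := ne_of_gt hb'
      have hm : (a + b) / 2 ≠ 0 := by positivity
      simp only [if_neg ha0, if_neg hb0]
      rw [Real.log_div ha0 hm, Real.log_div hb0 hm]
      simp only [psi, phi]
      rw [Real.log_div (by positivity : a + b ≠ 0) (by norm_num : (2:ℝ) ≠ 0)]
      ring

/-- The squared JSD equals the sum of `psi` over coordinates. -/
lemma jsd_sq_eq {X : Type*} [Fintype X] {p q : X → ℝ}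
    (hp : ∀ x, 0 ≤ p x) (hq : ∀ x, 0 ≤ q x) :
    (1 / 2 : ℝ) * KL p (fun x => (p x + q x) / 2)
      + (1 / 2) * KL q (fun x => (p x + q x) / 2)
      = ∑ x, psi (p x) (q x) := by
  unfold KL
  rw [Finset.mul_sum, Finset.mul_sum, ← Finset.sum_add_distrib]
  exact Finset.sum_congr rfl fun x _ => half_term (hp x) (hq x)

lemma JSD_eq_sqrt {X : Type*} [Fintype X] {p q : X → ℝ}
    (hp : ∀ x, 0 ≤ p x) (hq : ∀ x, 0 ≤ q x) :
    JSD p q = Real.sqrt (∑ x, psi (p x) (q x)) := by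
  unfold JSD
  rw [jsd_sq_eq hp hq]

/-- Triangle inequality for JSD on nonnegative vectors. -/
lemma JSD_triangle {X : Type*} [Fintype X] {p q r : X → ℝ}
    (hp : ∀ x, 0 ≤ p x) (hq : ∀ x, 0 ≤ q x) (hr : ∀ x, 0 ≤ r x) :
    JSD p r ≤ JSD p q + JSD q r := by
  rw [JSD_eq_sqrt hp hr, JSD_eq_sqrt hp hq, JSD_eq_sqrt hq hr]
  have h1 : ∑ x, psi (p x) (r x)
      ≤ ∑ x, (Real.sqrt (psi (p x) (q x)) + Real.sqrt (psi (q x) (r x)))^2 := by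
    apply Finset.sum_le_sum
    intro x _
    have htri := tri (hp x) (hq x) (hr x)
    have h0 : 0 ≤ psi (p x) (r x) := psi_nonneg (hp x) (hr x)
    calc psi (p x) (r x) = (Real.sqrt (psi (p x) (r x)))^2 := (Real.sq_sqrt h0).symm
      _ ≤ (Real.sqrt (psi (p x) (q x)) + Real.sqrt (psi (q x) (r x)))^2 := by
          apply pow_le_pow_left₀ (Real.sqrt_nonneg _) htri
  have h2 : ∑ x, (Real.sqrt (psi (p x) (q x)) + Real.sqrt (psi (q x) (r x)))^2
      ≤ (Real.sqrt (∑ x, psi (p x) (q x)) + Real.sqrt (∑ x, psi (q x) (r x)))^2 := by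
    have hcs := Real.sum_sqrt_mul_sqrt_le (Finset.univ : Finset X)
      (fun x => psi_nonneg (hp x) (hq x)) (fun x => psi_nonneg (hq x) (hr x))
    have e1 : ∀ x : X, (Real.sqrt (psi (p x) (q x)) + Real.sqrt (psi (q x) (r x)))^2
        = psi (p x) (q x) + psi (q x) (r x)
          + 2 * (Real.sqrt (psi (p x) (q x)) * Real.sqrt (psi (q x) (r x))) := by
      intro x
      rw [add_sq, Real.sq_sqrt (psi_nonneg (hp x) (hq x)),
        Real.sq_sqrt (psi_nonneg (hq x) (hr x))]
      ring
    simp only [e1]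
    rw [Finset.sum_add_distrib, Finset.sum_add_distrib, ← Finset.mul_sum]
    have e2 : (Real.sqrt (∑ x, psi (p x) (q x)) + Real.sqrt (∑ x, psi (q x) (r x)))^2
        = (∑ x, psi (p x) (q x)) + (∑ x, psi (q x) (r x))
          + 2 * (Real.sqrt (∑ x, psi (p x) (q x)) * Real.sqrt (∑ x, psi (q x) (r x))) := by
      rw [add_sq, Real.sq_sqrt (Finset.sum_nonneg fun x _ => psi_nonneg (hp x) (hq x)),
        Real.sq_sqrt (Finset.sum_nonneg fun x _ => psi_nonneg (hq x) (hr x))]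
      ring
    rw [e2]
    linarith
  calc Real.sqrt (∑ x, psi (p x) (r x))
      ≤ Real.sqrt ((Real.sqrt (∑ x, psi (p x) (q x))
          + Real.sqrt (∑ x, psi (q x) (r x)))^2) := Real.sqrt_le_sqrt (le_trans h1 h2)
    _ = Real.sqrt (∑ x, psi (p x) (q x)) + Real.sqrt (∑ x, psi (q x) (r x)) :=
        Real.sqrt_sq (by positivity)

/-- Log-sum inequality. -/
lemma log_sum {ι : Type*} (s : Finset ι) (f g : ι → ℝ)
    (hf : ∀ i ∈ s, 0 ≤ f i) (hg : ∀ i ∈ s, 0 ≤ g i)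
    (habs : ∀ i ∈ s, g i = 0 → f i = 0) :
    (∑ i ∈ s, f i) * Real.log ((∑ i ∈ s, f i) / (∑ i ∈ s, g i))
      ≤ ∑ i ∈ s, f i * Real.log (f i / g i) := by
  set F := ∑ i ∈ s, f i with hF
  set G := ∑ i ∈ s, g i with hG
  rcases eq_or_lt_of_le (Finset.sum_nonneg hg) with hG0 | hGpos
  · -- G = 0 : all g = 0, so all f = 0
    have hg0 : ∀ i ∈ s, g i = 0 := by
      intro i hi
      exact le_antisymm (by
        by_contra hlt
        push_neg at hlt
        have : 0 < ∑ i ∈ s, g i := Finset.sum_pos' hg ⟨i, hi, hlt⟩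
        rw [← hG0] at this; exact lt_irrefl _ this) (hg i hi)
    have hf0 : ∀ i ∈ s, f i = 0 := fun i hi => habs i hi (hg0 i hi)
    have : F = 0 := Finset.sum_eq_zero hf0
    rw [this]
    simp only [zero_mul]
    apply Finset.sum_nonneg
    intro i hi
    rw [hf0 i hi]
    simp
  · -- G > 0 : Jensen
    have hjen := Real.convexOn_mul_log.map_sum_le
      (t := s) (w := fun i => g i / G) (p := fun i => f i / g i)
      (fun i hi => div_nonneg (hg i hi) hGpos.le)
      (by rw [← Finset.sum_div]; exact div_self (ne_of_gt hGpos))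
      (fun i hi => Set.mem_Ici.2 (div_nonneg (hf i hi) (hg i hi)))
    simp only [smul_eq_mul] at hjen
    have hsum_eq : ∑ i ∈ s, (g i / G) * (f i / g i) = F / G := by
      rw [hF, Finset.sum_div]
      apply Finset.sum_congr rfl
      intro i hi
      rcases eq_or_lt_of_le (hg i hi) with hgi0 | hgi
      · rw [← hgi0, habs i hi hgi0.symm]
        simp
      · field_simp
    rw [hsum_eq] at hjen
    -- multiply by G
    have hmul := mul_le_mul_of_nonneg_left hjen hGpos.le
    have hL : G * ((F / G) * Real.log (F / G)) = F * Real.log (F / G) := by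
      have hG0 : G ≠ 0 := ne_of_gt hGpos
      field_simp
    rw [hL] at hmul
    have hR : G * ∑ i ∈ s, (g i / G) * ((f i / g i) * Real.log (f i / g i))
        = ∑ i ∈ s, f i * Real.log (f i / g i) := by
      rw [Finset.mul_sum]
      apply Finset.sum_congr rfl
      intro i hi
      rcases eq_or_lt_of_le (hg i hi) with hgi0 | hgi
      · rw [← hgi0, habs i hi hgi0.symm]
        simp
      · have hG0 : G ≠ 0 := ne_of_gt hGpos
        field_simp
    rw [hR] at hmul
    exact hmul

/-- Superadditivity-type bound: `psi` of sums is at most sum of `psi`s. -/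
lemma psi_sum_le {ι : Type*} (s : Finset ι) (a b : ι → ℝ)
    (ha : ∀ i ∈ s, 0 ≤ a i) (hb : ∀ i ∈ s, 0 ≤ b i) :
    psi (∑ i ∈ s, a i) (∑ i ∈ s, b i) ≤ ∑ i ∈ s, psi (a i) (b i) := by
  set A := ∑ i ∈ s, a i with hA
  set B := ∑ i ∈ s, b i with hB
  have hA0 : 0 ≤ A := Finset.sum_nonneg ha
  have hB0 : 0 ≤ B := Finset.sum_nonneg hb
  rw [← half_term hA0 hB0]
  have hm : ∀ i ∈ s, 0 ≤ (a i + b i) / 2 := fun i hi => by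
    have := ha i hi; have := hb i hi; positivity
  have hMsum : (A + B) / 2 = ∑ i ∈ s, (a i + b i) / 2 := by
    rw [hA, hB, ← Finset.sum_add_distrib, Finset.sum_div]
  have key1 : (if A = 0 then 0 else A * Real.log (A / ((A + B) / 2)))
      ≤ ∑ i ∈ s, (if a i = 0 then 0 else a i * Real.log (a i / ((a i + b i) / 2))) := by
    rcases eq_or_ne A 0 with hA' | hA'
    · rw [if_pos hA']
      apply Finset.sum_nonneg
      intro i hi
      have hai : a i = 0 := by
        have := (Finset.sum_eq_zero_iff_of_nonneg ha).1 (hA ▸ hA') i hi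
        exact this
      simp [hai]
    · rw [if_neg hA']
      have hls := log_sum s a (fun i => (a i + b i) / 2) ha hm
        (fun i hi h0 => by
          have hai := ha i hi; have hbi := hb i hi
          have : a i + b i = 0 := by linarith [h0]
          linarith)
      rw [← hMsum] at hls
      calc A * Real.log (A / ((A + B) / 2)) ≤ ∑ i ∈ s, a i * Real.log (a i / ((a i + b i) / 2)) := hls
        _ = ∑ i ∈ s, (if a i = 0 then 0 else a i * Real.log (a i / ((a i + b i) / 2))) := by
            apply Finset.sum_congr rfl
            intro i hi
            rcases eq_or_ne (a i) 0 with h | h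
            · simp [h]
            · rw [if_neg h]
  have key2 : (if B = 0 then 0 else B * Real.log (B / ((A + B) / 2)))
      ≤ ∑ i ∈ s, (if b i = 0 then 0 else b i * Real.log (b i / ((a i + b i) / 2))) := by
    rcases eq_or_ne B 0 with hB' | hB'
    · rw [if_pos hB']
      apply Finset.sum_nonneg
      intro i hi
      have hbi : b i = 0 := (Finset.sum_eq_zero_iff_of_nonneg hb).1 (hB ▸ hB') i hi
      simp [hbi]
    · rw [if_neg hB']
      have hls := log_sum s b (fun i => (a i + b i) / 2) hb hm
        (fun i hi h0 => by
          have hai := ha i hi; have hbi := hb i hi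
          have : a i + b i = 0 := by linarith [h0]
          linarith)
      rw [← hMsum] at hls
      have hBA : (B + A) / 2 = (A + B) / 2 := by ring
      calc B * Real.log (B / ((A + B) / 2)) ≤ ∑ i ∈ s, b i * Real.log (b i / ((a i + b i) / 2)) := by
            convert hls using 3
      _ = ∑ i ∈ s, (if b i = 0 then 0 else b i * Real.log (b i / ((a i + b i) / 2))) := by
            apply Finset.sum_congr rfl
            intro i hi
            rcases eq_or_ne (b i) 0 with h | h
            · simp [h]
            · rw [if_neg h]
  calc (1/2 : ℝ) * (if A = 0 then 0 else A * Real.log (A / ((A + B) / 2)))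
        + (1/2 : ℝ) * (if B = 0 then 0 else B * Real.log (B / ((A + B) / 2)))
      ≤ (1/2 : ℝ) * (∑ i ∈ s, (if a i = 0 then 0 else a i * Real.log (a i / ((a i + b i) / 2))))
        + (1/2 : ℝ) * (∑ i ∈ s, (if b i = 0 then 0 else b i * Real.log (b i / ((a i + b i) / 2)))) := by
        apply add_le_add <;> apply mul_le_mul_of_nonneg_left (by assumption) (by norm_num)
    _ = ∑ i ∈ s, ((1/2 : ℝ) * (if a i = 0 then 0 else a i * Real.log (a i / ((a i + b i) / 2)))
        + (1/2 : ℝ) * (if b i = 0 then 0 else b i * Real.log (b i / ((a i + b i) / 2)))) := by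
        rw [Finset.mul_sum, Finset.mul_sum, ← Finset.sum_add_distrib]
    _ = ∑ i ∈ s, psi (a i) (b i) :=
        Finset.sum_congr rfl fun i hi => half_term (ha i hi) (hb i hi)

variable {N M : Type*} [Fintype N] [Fintype M] [DecidableEq N] {α : Matrix N M ℝ}

/-- The selection function of an abstraction matrix. -/
lemma abs_exists_sigma (hα : IsAbsMatrix α) :
    ∃ σ : M → N, ∀ j i, α j i = if σ i = j then 1 else 0 := by
  choose σ h1 h2 using hα.2.1
  refine ⟨σ, fun j i => ?_⟩
  rcases eq_or_ne (σ i) j with rfl | hne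
  · rw [if_pos rfl]; exact h1 i
  · rw [if_neg hne]
    rcases hα.1 j i with h | h
    · exact h
    · exact absurd (h2 i j h).symm hne

lemma abs_row_sum_pos (hα : IsAbsMatrix α) (j : N) : 0 < ∑ i, α j i := by
  obtain ⟨i0, hi0⟩ := hα.2.2 j
  have h1 : (1:ℝ) ≤ ∑ i, α j i := by
    rw [← hi0]
    apply Finset.single_le_sum (fun i _ => ?_) (Finset.mem_univ i0)
    rcases hα.1 j i with h | h <;> simp [h]
  linarith

lemma pinv_apply (hα : IsAbsMatrix α) (i : M) (j : N) :
    pinv α i j = α j i / (∑ i', α j i') := by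
  obtain ⟨σ, hval⟩ := abs_exists_sigma hα
  have hdiag : α * αᵀ = Matrix.diagonal (fun j => ∑ i', α j i') := by
    ext j j'
    rw [Matrix.mul_apply]
    rcases eq_or_ne j j' with rfl | hne
    · simp only [Matrix.diagonal_apply_eq]
      apply Finset.sum_congr rfl
      intro i _
      rw [Matrix.transpose_apply]
      rcases hα.1 j i with h | h <;> simp [h]
    · rw [Matrix.diagonal_apply_ne _ hne]
      apply Finset.sum_eq_zero
      intro i _
      rw [Matrix.transpose_apply, hval j i, hval j' i]
      split_ifs with h1 h2
      · exact absurd (h1.symm.trans h2) hne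
      all_goals simp
  have hinv : (α * αᵀ)⁻¹ = Matrix.diagonal (fun j => (∑ i', α j i')⁻¹) := by
    apply Matrix.inv_eq_right_inv
    rw [hdiag, Matrix.diagonal_mul_diagonal]
    have : (fun j => (∑ i', α j i') * (∑ i', α j i')⁻¹) = fun _ => (1:ℝ) := by
      funext j
      exact mul_inv_cancel₀ (ne_of_gt (abs_row_sum_pos hα j))
    rw [this, Matrix.diagonal_one]
  rw [pinv, hinv, Matrix.mul_diagonal, Matrix.transpose_apply, div_eq_mul_inv]

lemma pinv_nonneg (hα : IsAbsMatrix α) (i : M) (j : N) : 0 ≤ pinv α i j := by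
  rw [pinv_apply hα]
  apply div_nonneg _ (abs_row_sum_pos hα j).le
  rcases hα.1 j i with h | h <;> simp [h]

lemma pinv_col_sum (hα : IsAbsMatrix α) (j : N) : ∑ i, pinv α i j = 1 := by
  simp only [pinv_apply hα]
  rw [← Finset.sum_div]
  exact div_self (ne_of_gt (abs_row_sum_pos hα j))

lemma pinv_mulVec_nonneg (hα : IsAbsMatrix α) {p : N → ℝ} (hp : ∀ j, 0 ≤ p j) (i : M) :
    0 ≤ (pinv α).mulVec p i :=
  Finset.sum_nonneg fun j _ => mul_nonneg (pinv_nonneg hα i j) (hp j)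

/-- Applying the pseudo-inverse of an abstraction preserves the `psi`-sum. -/
lemma sum_psi_pinv (hα : IsAbsMatrix α) (p q : N → ℝ) :
    ∑ i, psi ((pinv α).mulVec p i) ((pinv α).mulVec q i) = ∑ j, psi (p j) (q j) := by
  classical
  obtain ⟨σ, hval⟩ := abs_exists_sigma hα
  set r : N → ℝ := fun j => ∑ i', α j i' with hr
  have hrpos : ∀ j, 0 < r j := abs_row_sum_pos hα
  have hmv : ∀ (v : N → ℝ) (i : M), (pinv α).mulVec v i = (r (σ i))⁻¹ * v (σ i) := by
    intro v i
    unfold Matrix.mulVec dotProduct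
    rw [Finset.sum_eq_single (σ i)]
    · show pinv α i (σ i) * v (σ i) = _
      rw [pinv_apply hα, hval (σ i) i, if_pos rfl]
      field_simp
      rfl
    · intro j _ hj
      show pinv α i j * v j = 0
      rw [pinv_apply hα, hval j i, if_neg (Ne.symm hj)]
      simp
    · intro h; exact absurd (Finset.mem_univ _) h
  have hterm : ∀ i : M, psi ((pinv α).mulVec p i) ((pinv α).mulVec q i)
      = (r (σ i))⁻¹ * psi (p (σ i)) (q (σ i)) := by
    intro i
    rw [hmv p i, hmv q i, psi_mul]
  calc ∑ i, psi ((pinv α).mulVec p i) ((pinv α).mulVec q i)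
      = ∑ i, (r (σ i))⁻¹ * psi (p (σ i)) (q (σ i)) := Finset.sum_congr rfl fun i _ => hterm i
    _ = ∑ j, ∑ i ∈ Finset.univ.filter (fun i => σ i = j),
          (r (σ i))⁻¹ * psi (p (σ i)) (q (σ i)) :=
        (Finset.sum_fiberwise_of_maps_to (fun i _ => Finset.mem_univ (σ i)) _).symm
    _ = ∑ j, ∑ i ∈ Finset.univ.filter (fun i => σ i = j), (r j)⁻¹ * psi (p j) (q j) := by
        apply Finset.sum_congr rfl; intro j _
        apply Finset.sum_congr rfl; intro i hi
        rw [(Finset.mem_filter.1 hi).2]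
    _ = ∑ j, ((Finset.univ.filter (fun i => σ i = j)).card : ℝ) * ((r j)⁻¹ * psi (p j) (q j)) := by
        apply Finset.sum_congr rfl; intro j _
        rw [Finset.sum_const, nsmul_eq_mul]
    _ = ∑ j, psi (p j) (q j) := by
        apply Finset.sum_congr rfl; intro j _
        have hcard : ((Finset.univ.filter (fun i => σ i = j)).card : ℝ) = r j := by
          rw [hr]
          show _ = ∑ i' : M, α j i'
          rw [Finset.card_filter]
          push_cast
          apply Finset.sum_congr rfl
          intro i _
          rw [hval j i]
        rw [hcard, ← mul_assoc, mul_inv_cancel₀ (ne_of_gt (hrpos j)), one_mul]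
  
/-- Applying the pseudo-inverse of an abstraction preserves JSD. -/
lemma JSD_pinv (hα : IsAbsMatrix α) {p q : N → ℝ}
    (hp : ∀ j, 0 ≤ p j) (hq : ∀ j, 0 ≤ q j) :
    JSD ((pinv α).mulVec p) ((pinv α).mulVec q) = JSD p q := by
  rw [JSD_eq_sqrt (pinv_mulVec_nonneg hα hp) (pinv_mulVec_nonneg hα hq),
    JSD_eq_sqrt hp hq, sum_psi_pinv hα]

/-- Mixture bound: JSD of matrix-vector products is at most the sup over columns. -/
lemma JSD_mixture {Y J : Type*} [Fintype Y] [Fintype J] [Nonempty J]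
    {A B : Matrix Y J ℝ} (hA : ∀ y j, 0 ≤ A y j) (hB : ∀ y j, 0 ≤ B y j)
    {w : J → ℝ} (hw : ∀ j, 0 ≤ w j) (hw1 : ∑ j, w j = 1) :
    JSD (A.mulVec w) (B.mulVec w)
      ≤ Finset.univ.sup' Finset.univ_nonempty
          (fun j => JSD (fun y => A y j) (fun y => B y j)) := by
  classical
  set S : J → ℝ := fun j => ∑ y, psi (A y j) (B y j) with hS
  have hS0 : ∀ j, 0 ≤ S j := fun j => Finset.sum_nonneg fun y _ => psi_nonneg (hA y j) (hB y j)
  have hAv : ∀ y, 0 ≤ A.mulVec w y := fun y =>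
    Finset.sum_nonneg fun j _ => mul_nonneg (hA y j) (hw j)
  have hBv : ∀ y, 0 ≤ B.mulVec w y := fun y =>
    Finset.sum_nonneg fun j _ => mul_nonneg (hB y j) (hw j)
  rw [JSD_eq_sqrt hAv hBv]
  have hstep : ∑ y, psi (A.mulVec w y) (B.mulVec w y) ≤ ∑ j, w j * S j := by
    have h1 : ∀ y, psi (A.mulVec w y) (B.mulVec w y) ≤ ∑ j, w j * psi (A y j) (B y j) := by
      intro y
      have := psi_sum_le Finset.univ (fun j => A y j * w j) (fun j => B y j * w j)
        (fun j _ => mul_nonneg (hA y j) (hw j)) (fun j _ => mul_nonneg (hB y j) (hw j))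
      unfold Matrix.mulVec dotProduct
      refine le_trans this (le_of_eq ?_)
      apply Finset.sum_congr rfl
      intro j _
      show psi (A y j * w j) (B y j * w j) = _
      rw [mul_comm (A y j) (w j), mul_comm (B y j) (w j), psi_mul]
    calc ∑ y, psi (A.mulVec w y) (B.mulVec w y)
        ≤ ∑ y, ∑ j, w j * psi (A y j) (B y j) := Finset.sum_le_sum fun y _ => h1 y
      _ = ∑ j, w j * S j := by
          rw [Finset.sum_comm]
          apply Finset.sum_congr rfl
          intro j _
          rw [hS, ← Finset.mul_sum]
  set T := Finset.univ.sup' (Finset.univ_nonempty (α := J)) S with hT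
  have hwT : ∑ j, w j * S j ≤ T := by
    calc ∑ j, w j * S j ≤ ∑ j, w j * T := by
          apply Finset.sum_le_sum
          intro j _
          exact mul_le_mul_of_nonneg_left (Finset.le_sup' S (Finset.mem_univ j)) (hw j)
      _ = T := by rw [← Finset.sum_mul, hw1, one_mul]
  obtain ⟨j0, _, hj0⟩ := Finset.exists_mem_eq_sup' (Finset.univ_nonempty (α := J)) S
  calc Real.sqrt (∑ y, psi (A.mulVec w y) (B.mulVec w y))
      ≤ Real.sqrt T := Real.sqrt_le_sqrt (le_trans hstep hwT)
    _ = Real.sqrt (S j0) := by rw [hT, hj0]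
    _ = JSD (fun y => A y j0) (fun y => B y j0) :=
        (JSD_eq_sqrt (fun y => hA y j0) (fun y => hB y j0)).symm
    _ ≤ _ := Finset.le_sup' (f := fun j => JSD (fun y => A y j) (fun y => B y j))
        (Finset.mem_univ j0)

lemma mul_entries_nonneg {I J K : Type*} [Fintype J] {M : Matrix I J ℝ} {N : Matrix J K ℝ}
    (hM : ∀ i j, 0 ≤ M i j) (hN : ∀ j k, 0 ≤ N j k) (i : I) (k : K) : 0 ≤ (M * N) i k := by
  rw [Matrix.mul_apply]
  exact Finset.sum_nonneg fun j _ => mul_nonneg (hM i j) (hN j k)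

lemma col_mul {I J K : Type*} [Fintype J] (M : Matrix I J ℝ) (N : Matrix J K ℝ) (k : K) :
    (fun i => (M * N) i k) = M.mulVec (fun j => N j k) := by
  funext i
  rw [Matrix.mul_apply]
  rfl

end ISCAux

open ISCAux in
theorem isc_triangle {X X' X'' Y Y' Y'' : Type*}
    [Fintype X] [Nonempty X] [Fintype X'] [Nonempty X'] [Fintype X''] [Nonempty X'']
    [Fintype Y] [Nonempty Y] [Fintype Y'] [Nonempty Y'] [Fintype Y''] [Nonempty Y'']
    [DecidableEq X'] [DecidableEq X''] [DecidableEq Y'] [DecidableEq Y'']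
    (μ : Matrix Y X ℝ) (μ' : Matrix Y' X' ℝ) (μ'' : Matrix Y'' X'' ℝ)
    (αX : Matrix X' X ℝ) (αY : Matrix Y' Y ℝ)
    (βX : Matrix X'' X' ℝ) (βY : Matrix Y'' Y' ℝ)
    (hμ : IsColStoch μ) (hμ' : IsColStoch μ') (hμ'' : IsColStoch μ'')
    (hαX : IsAbsMatrix αX) (hαY : IsAbsMatrix αY)
    (hβX : IsAbsMatrix βX) (hβY : IsAbsMatrix βY) :
    supJSD (μ * pinv αX * pinv βX) (pinv αY * pinv βY * μ'')
      ≤ supJSD (μ * pinv αX) (pinv αY * μ') + supJSD (μ' * pinv βX) (pinv βY * μ'') := by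
  classical
  set A := μ * pinv αX with hA
  set B := pinv αY * μ' with hB
  set C := μ' * pinv βX with hC
  set E := pinv βY * μ'' with hE
  have hAn : ∀ y x', 0 ≤ A y x' := mul_entries_nonneg hμ.1 (pinv_nonneg hαX)
  have hBn : ∀ y x', 0 ≤ B y x' := mul_entries_nonneg (pinv_nonneg hαY) hμ'.1
  have hCn : ∀ y' x'', 0 ≤ C y' x'' := mul_entries_nonneg hμ'.1 (pinv_nonneg hβX)
  have hEn : ∀ y' x'', 0 ≤ E y' x'' := mul_entries_nonneg (pinv_nonneg hβY) hμ''.1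
  have hL1n : ∀ y x'', 0 ≤ (A * pinv βX) y x'' := mul_entries_nonneg hAn (pinv_nonneg hβX)
  have hMidn : ∀ y x'', 0 ≤ (B * pinv βX) y x'' := mul_entries_nonneg hBn (pinv_nonneg hβX)
  have hL2n : ∀ y x'', 0 ≤ (pinv αY * E) y x'' :=
    mul_entries_nonneg (pinv_nonneg hαY) hEn
  have hassoc2 : pinv αY * pinv βY * μ'' = pinv αY * E := by
    rw [hE, Matrix.mul_assoc]
  rw [hassoc2]
  unfold supJSD
  apply Finset.sup'_le
  intro x'' _
  set w : X' → ℝ := fun x' => pinv βX x' x'' with hw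
  have hwn : ∀ x', 0 ≤ w x' := fun x' => pinv_nonneg hβX x' x''
  have hw1 : ∑ x', w x' = 1 := pinv_col_sum hβX x''
  -- triangle through the middle point
  have htri : JSD (fun y => (A * pinv βX) y x'') (fun y => (pinv αY * E) y x'')
      ≤ JSD (fun y => (A * pinv βX) y x'') (fun y => (B * pinv βX) y x'')
        + JSD (fun y => (B * pinv βX) y x'') (fun y => (pinv αY * E) y x'') :=
    JSD_triangle (fun y => hL1n y x'') (fun y => hMidn y x'') (fun y => hL2n y x'')
  -- first leg: mixture bound
  have h1 : JSD (fun y => (A * pinv βX) y x'') (fun y => (B * pinv βX) y x'')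
      ≤ Finset.univ.sup' Finset.univ_nonempty
          (fun x' => JSD (fun y => A y x') (fun y => B y x')) := by
    rw [col_mul A (pinv βX) x'', col_mul B (pinv βX) x'']
    exact JSD_mixture hAn hBn hwn hw1
  -- second leg: pinv preservation
  have hmidassoc : B * pinv βX = pinv αY * C := by
    rw [hB, hC, Matrix.mul_assoc]
  have h2 : JSD (fun y => (B * pinv βX) y x'') (fun y => (pinv αY * E) y x'')
      ≤ Finset.univ.sup' Finset.univ_nonempty
          (fun z => JSD (fun y' => C y' z) (fun y' => E y' z)) := by
    rw [hmidassoc, col_mul (pinv αY) C x'', col_mul (pinv αY) E x'',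
      JSD_pinv hαY (fun y' => hCn y' x'') (fun y' => hEn y' x'')]
    exact Finset.le_sup' (f := fun z => JSD (fun y' => C y' z) (fun y' => E y' z))
      (Finset.mem_univ x'')
  calc JSD (fun y => (A * pinv βX) y x'') (fun y => (pinv αY * E) y x'')
      ≤ _ + _ := htri
    _ ≤ _ := add_le_add h1 h2
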